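/- No deterministic local strategy wins the three-player contextual triangle game on all eight inputs; consequently, for input triples drawn uniformly at random from {0,1}^3, every deterministic local strategy wins with probability at most 7/8. -/

import Mathlib

/-- A deterministic local strategy in the three-player contextual triangle game:
player `p` holds fixed bits `a p, b0 p, c p, d p, b1 p, e p`; on input `x p = 0`
they output `(a p, b0 p, c p)` and on input `x p = 1` they output `(d p, b1 p, e p)`.
`TriWin a b0 c d b1 e x` says the strategy wins on global input `x`. -/
def TriWin (a b0 c d b1 e : Fin 3 → ZMod 2) (x : Fin 3 → ZMod 2) : Prop :=
  -- (i) the sum of all nine output bits is 0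
  (∑ p : Fin 3, ((if x p = 0 then a p else d p) + (if x p = 0 then b0 p else b1 p)
      + (if x p = 0 then c p else e p)) = 0)
  -- (ii) if x = (0,0,0) then a₁ + a₂ + a₃ = 0
  ∧ (x = (fun _ => 0) → a 0 + a 1 + a 2 = 0)
  -- (iii) b₁^{x₁} + b₂^{x₂} + b₃^{x₃} = 0
  ∧ (∑ p : Fin 3, (if x p = 0 then b0 p else b1 p)) = 0
  -- (iv) for each p with x_p = 1, x_{p+1} = 1, x_{p+2} = 0: d_p + e_{p+1} + a_{p+2} = 1
  ∧ (∀ p : Fin 3, x p = 1 → x (p + 1) = 1 → x (p + 2) = 0 →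
      d p + e (p + 1) + a (p + 2) = 1)

instance (a b0 c d b1 e : Fin 3 → ZMod 2) : DecidablePred (TriWin a b0 c d b1 e) := fun x => by
  unfold TriWin; infer_instance

lemma no_perfect (a b0 c d b1 e : Fin 3 → ZMod 2) :
    ¬ ∀ x : Fin 3 → ZMod 2, TriWin a b0 c d b1 e x := by
  intro h
  obtain ⟨_, h000, _, _⟩ := h ![0,0,0]
  obtain ⟨h111i, _, h111iii, _⟩ := h ![1,1,1]
  obtain ⟨_, _, _, h110⟩ := h ![1,1,0]
  obtain ⟨_, _, _, h011⟩ := h ![0,1,1]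
  obtain ⟨_, _, _, h101⟩ := h ![1,0,1]
  have E1 : a 0 + a 1 + a 2 = 0 := by
    apply h000; funext i; fin_cases i <;> rfl
  have E2 := h111i
  have E3 := h111iii
  have F1 : d 0 + e 1 + a 2 = 1 := h110 0 rfl rfl rfl
  have F2 : d 1 + e 2 + a 0 = 1 := h011 1 rfl rfl rfl
  have F3 : d 2 + e 0 + a 1 = 1 := h101 2 rfl rfl rfl
  simp only [Fin.sum_univ_three, Matrix.cons_val_zero, Matrix.cons_val_one, Matrix.head_cons,
    Matrix.cons_val_two, Matrix.tail_cons, if_neg (by decide : (1 : ZMod 2) ≠ 0), one_ne_zero, if_false] at E2 E3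
  have two : (2 : ZMod 2) = 0 := rfl
  have h3 : (1 : ZMod 2) = 0 := by
    linear_combination F1 + F2 + F3 - E1 - E2 + E3 + 2 * two
  exact absurd h3 (by decide)

theorem no_perfect_classical_strategy (a b0 c d b1 e : Fin 3 → ZMod 2) :
    (¬ ∀ x : Fin 3 → ZMod 2, TriWin a b0 c d b1 e x) ∧
    ((Finset.univ.filter (fun x => TriWin a b0 c d b1 e x)).card : ℝ) /
        (Fintype.card (Fin 3 → ZMod 2) : ℝ) ≤ 7 / 8 := by
  refine ⟨no_perfect a b0 c d b1 e, ?_⟩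
  have hcard : Fintype.card (Fin 3 → ZMod 2) = 8 := by
    rw [Fintype.card_fun]; rfl
  have hne : Finset.univ.filter (fun x => TriWin a b0 c d b1 e x) ≠ Finset.univ := by
    intro heq
    apply no_perfect a b0 c d b1 e
    intro x
    have hx : x ∈ Finset.univ.filter (fun x => TriWin a b0 c d b1 e x) := by
      rw [heq]; exact Finset.mem_univ x
    exact (Finset.mem_filter.mp hx).2
  have hlt : (Finset.univ.filter (fun x => TriWin a b0 c d b1 e x)).card < 8 := by
    have := Finset.card_lt_card ((Finset.filter_subset _ _).ssubset_of_ne hne)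
    rwa [Finset.card_univ, hcard] at this
  rw [hcard]
  have : ((Finset.univ.filter (fun x => TriWin a b0 c d b1 e x)).card : ℝ) ≤ 7 := by
    exact_mod_cast Nat.lt_succ_iff.mp hlt
  linarith
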